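/- Let h: ℝⁿ → ℝⁿ be a C¹ map whose Jacobian matrix H(z) at every point z is invertible and has exactly one nonzero entry in each row, with the same sparsity pattern (same nonzero positions) for all z. Then h is a composition of a fixed coordinate permutation and a componentwise map: h(z)_k = h_k(z_{π(k)}) for some permutation π and functions h_k: ℝ → ℝ with nonvanishing derivative. -/

import Mathlib

/-- **A map with row-sparse invertible Jacobian is a permutation composed with a
componentwise transformation.**
If `h : ℝⁿ → ℝⁿ` is C¹ with invertible Jacobian `H(z)` everywhere, and there is
`π : Fin n → Fin n` such that the `(k,j)` entry of `H(z)` is nonzero iff `j = π k`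
(one nonzero entry per row, constant sparsity pattern), then `π` is a bijection and
`h(z)_k = h_k(z_{π(k)})` for some scalar functions `h_k` with nonvanishing derivative. -/
theorem rowSparse_jacobian_implies_perm_componentwise {n : ℕ}
    (h : (Fin n → ℝ) → (Fin n → ℝ)) (hh : ContDiff ℝ 1 h)
    (π : Fin n → Fin n)
    (hJinv : ∀ z, (Matrix.of fun k j => fderiv ℝ h z (Pi.single j 1) k).det ≠ 0)
    (hsparse : ∀ z k j, fderiv ℝ h z (Pi.single j 1) k ≠ 0 ↔ j = π k) :
    Function.Bijective π ∧
    ∃ g : Fin n → ℝ → ℝ, (∀ k x, deriv (g k) x ≠ 0) ∧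
      ∀ z k, h z k = g k (z (π k)) := by
  have hd : Differentiable ℝ h := hh.differentiable one_ne_zero
  -- derivative along a line
  have hcomp : ∀ (z v : Fin n → ℝ) (t : ℝ),
      HasDerivAt (fun s => h (z + s • v)) (fderiv ℝ h (z + t • v) v) t := by
    intro z v t
    have h1 : HasDerivAt (fun s : ℝ => z + s • v) v t := by
      simpa using ((hasDerivAt_id t).smul_const v).const_add z
    exact (hd _).hasFDerivAt.comp_hasDerivAt t h1
  -- fderiv vanishes on vectors whose π k component is 0
  have hzero : ∀ (p v : Fin n → ℝ) (k : Fin n), v (π k) = 0 →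
      fderiv ℝ h p v k = 0 := by
    intro p v k hv
    have hv' : v = ∑ j, v j • (Pi.single j (1:ℝ) : Fin n → ℝ) := by
      ext i
      simp [Pi.single_apply, Finset.sum_apply, mul_ite]
    have h2 : fderiv ℝ h p v = ∑ j, v j • fderiv ℝ h p (Pi.single j 1) := by
      conv_lhs => rw [hv']
      rw [map_sum]
      simp
    rw [h2, Finset.sum_apply]
    apply Finset.sum_eq_zero
    intro j _
    simp only [Pi.smul_apply, smul_eq_mul]
    rcases eq_or_ne j (π k) with hj | hj
    · subst hj; rw [hv]; ring
    · have := (hsparse p k j).not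
      rw [not_ne_iff] at this
      rw [this.mpr hj]; ring
  -- key: h z k depends only on z (π k)
  have hkey : ∀ (k : Fin n) (z w : Fin n → ℝ), z (π k) = w (π k) → h z k = h w k := by
    intro k z w hzw
    set v := w - z with hvdef
    have hv0 : v (π k) = 0 := by simp [hvdef, hzw]
    have hφ : ∀ t : ℝ, HasDerivAt (fun s => h (z + s • v) k) 0 t := by
      intro t
      have h1 := hasDerivAt_pi.mp (hcomp z v t) k
      rwa [hzero _ _ _ hv0] at h1
    have hconst := is_const_of_deriv_eq_zero (f := fun s => h (z + s • v) k)
      (fun t => (hφ t).differentiableAt) (fun t => (hφ t).deriv)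
    have := hconst 0 1
    simpa [hvdef] using this
  constructor
  · have hsurj : Function.Surjective π := by
      intro j
      by_contra hj
      push_neg at hj
      apply hJinv 0
      apply Matrix.det_eq_zero_of_column_eq_zero j
      intro k
      simp only [Matrix.of_apply]
      by_contra h0
      exact hj k ((hsparse 0 k j).mp h0).symm
    exact Finite.surjective_iff_bijective.mp hsurj
  · refine ⟨fun k x => h (Pi.single (π k) x) k, ?_, ?_⟩
    · intro k x
      have h1 := hasDerivAt_pi.mp (hcomp 0 ((Pi.single (π k) (1:ℝ)) : Fin n → ℝ) x) k
      have heq : (fun s : ℝ => h ((0 : Fin n → ℝ) + s • ((Pi.single (π k) (1:ℝ)) : Fin n → ℝ)) k)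
          = fun s => h (Pi.single (π k) s) k := by
        funext s
        congr 1
        ext i
        simp [Pi.single_apply, mul_ite]
      rw [heq] at h1
      rw [h1.deriv]
      exact (hsparse _ k (π k)).mpr rfl
    · intro z k
      exact hkey k z (Pi.single (π k) (z (π k))) (by simp)
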